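/- Let 0 < a₀ < a₁ < ... < a_{k−1} be real numbers and d₀ < d₁ < ... < d_{k−1} be non-negative integers. Then the generalized Vandermonde matrix V with entries V_{ij} = aᵢ^{dⱼ} has strictly positive determinant. -/

import Mathlib

open Finset Matrix Polynomial

lemma keyRoots : ∀ (k : ℕ) (t : Fin k → ℕ), StrictMono t → ∀ (c x : Fin k → ℝ),
    StrictMono x → (∀ i, 0 < x i) → (∀ i, ∑ j, c j * x i ^ t j = 0) → ∀ j, c j = 0 := by
  intro k
  induction k with
  | zero => intro t _ c x _ _ _ j; exact j.elim0
  | succ k ih =>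
    intro t ht c x hx hxpos hroot
    -- g and its derivative
    set g : ℝ → ℝ := fun y => ∑ j, c j * y ^ (t j - t 0) with hg
    set g' : ℝ → ℝ := fun y => ∑ j, c j * ((t j - t 0 : ℕ) * y ^ (t j - t 0 - 1)) with hg'
    have hderiv : ∀ y : ℝ, HasDerivAt g (g' y) y := by
      intro y
      exact HasDerivAt.fun_sum fun j _ => (hasDerivAt_pow (t j - t 0) y).const_mul (c j)
    have hcont : Continuous g := by
      exact continuous_iff_continuousAt.mpr fun y => (hderiv y).continuousAt
    have ht0le : ∀ j : Fin (k+1), t 0 ≤ t j := fun j => ht.monotone (Fin.zero_le j)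
    have hgroot : ∀ i, g (x i) = 0 := by
      intro i
      have hne : x i ^ t 0 ≠ 0 := pow_ne_zero _ (ne_of_gt (hxpos i))
      have : x i ^ t 0 * g (x i) = 0 := by
        rw [hg]
        simp only [Finset.mul_sum]
        rw [← hroot i]
        refine Finset.sum_congr rfl fun j _ => ?_
        rw [mul_left_comm, ← pow_add, Nat.add_sub_cancel' (ht0le j)]
      exact (mul_eq_zero.mp this).resolve_left hne
    -- Rolle points
    have hrolle : ∀ i : Fin k, ∃ y ∈ Set.Ioo (x i.castSucc) (x i.succ), g' y = 0 := by
      intro i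
      exact exists_hasDerivAt_eq_zero (hx i.castSucc_lt_succ) hcont.continuousOn
        (by rw [hgroot, hgroot]) (fun y _ => hderiv y)
    choose y hy hy0 using hrolle
    have hcsucc : ∀ j : Fin k, c j.succ = 0 := by
      have h0lt : ∀ j : Fin k, t 0 < t j.succ := fun j => ht j.succ_pos
      have := ih (fun j => t j.succ - t 0 - 1)
        (by
          intro j j' h
          show t j.succ - t 0 - 1 < t j'.succ - t 0 - 1
          have h1 : t j.succ < t j'.succ := ht (Fin.succ_lt_succ_iff.mpr h)
          have h2 := h0lt j
          omega)
        (fun j => c j.succ * ((t j.succ : ℝ) - t 0)) y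
        (by
          intro i i' h
          calc y i < x i.succ := (hy i).2
            _ ≤ x i'.castSucc := hx.monotone (by
                simp only [Fin.le_def, Fin.val_succ, Fin.coe_castSucc]
                exact h)
            _ < y i' := (hy i').1)
        (fun i => lt_trans (hxpos i.castSucc) (hy i).1)
        (by
          intro i
          have h := hy0 i
          rw [hg'] at h
          simp only at h
          rw [Fin.sum_univ_succ] at h
          simp only [Nat.sub_self, Nat.cast_zero, zero_mul, mul_zero, zero_add] at h
          rw [← h]
          refine Finset.sum_congr rfl fun j _ => ?_
          rw [Nat.cast_sub (ht0le j.succ)]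
          ring)
      intro j
      have hj := this j
      have hne : (t j.succ : ℝ) - t 0 ≠ 0 := by
        have := h0lt j
        have : (t 0 : ℝ) < t j.succ := by exact_mod_cast this
        linarith
      exact (mul_eq_zero.mp hj).resolve_right hne
    have hc0 : c 0 = 0 := by
      have h := hroot 0
      rw [Fin.sum_univ_succ] at h
      simp only [hcsucc, zero_mul, Finset.sum_const_zero, add_zero] at h
      have hne : x 0 ^ t 0 ≠ 0 := pow_ne_zero _ (ne_of_gt (hxpos 0))
      exact (mul_eq_zero.mp h).resolve_right hne
    intro j
    refine Fin.cases hc0 hcsucc j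

theorem generalized_vandermonde_det_pos (k : ℕ) (a : Fin k → ℝ) (d : Fin k → ℕ)
    (ha_pos : ∀ i, 0 < a i) (ha : StrictMono a) (hd : StrictMono d) :
    0 < Matrix.det (Matrix.of fun i j => a i ^ d j) := by
  induction k with
  | zero => simp [Matrix.det_fin_zero]
  | succ k ih =>
    rcases Nat.eq_zero_or_pos k with rfl | hk
    · rw [Matrix.det_fin_one]
      simpa using pow_pos (ha_pos 0) (d 0)
    -- coefficients from Laplace expansion along last row
    set c : Fin (k+1) → ℝ := fun j =>
      (-1 : ℝ) ^ ((k : ℕ) + (j : ℕ)) *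
        Matrix.det ((Matrix.of fun (i : Fin k) (j' : Fin (k+1)) =>
          a i.castSucc ^ d j').submatrix id j.succAbove) with hc
    set F : ℝ → ℝ := fun x =>
      Matrix.det (Matrix.of fun (i j : Fin (k+1)) => ((Fin.snoc (fun i : Fin k => a i.castSucc) x : Fin (k+1) → ℝ) i) ^ d j)
      with hF
    have hFc : ∀ x : ℝ, F x = ∑ j, c j * x ^ d j := by
      intro x
      rw [hF]
      simp only
      rw [Matrix.det_succ_row _ (Fin.last k)]
      refine Finset.sum_congr rfl fun j _ => ?_
      rw [hc]
      simp only [Matrix.of_apply, Fin.snoc_last, Fin.succAbove_last, Matrix.submatrix_apply,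
        id_eq, Fin.snoc_castSucc, Fin.val_last]
      have hsub : ((Matrix.of fun (i j : Fin (k+1)) =>
          (Fin.snoc (fun i : Fin k => a i.castSucc) x : Fin (k+1) → ℝ) i ^ d j).submatrix
            Fin.castSucc j.succAbove) =
          ((Matrix.of fun (i : Fin k) (j' : Fin (k+1)) =>
            a i.castSucc ^ d j').submatrix id j.succAbove) := by
        ext i j'
        simp
      rw [hsub]
      ring
    -- the leading coefficient
    have hclast : 0 < c (Fin.last k) := by
      rw [hc]
      simp only [Fin.val_last, Fin.succAbove_last]
      rw [show ((k : ℕ) + k) = 2 * k by ring]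
      rw [pow_mul, neg_one_sq, one_pow, one_mul]
      have := ih (fun i => a i.castSucc) (fun j => d j.castSucc)
        (fun i => ha_pos _) (fun i j h => ha (by simpa using h)) (fun i j h => hd (by simpa using h))
      convert this using 2
      ext i j
      simp
    -- F vanishes nowhere above the first k points
    have hFne : ∀ x : ℝ, 0 < x → (∀ i : Fin k, a i.castSucc < x) → F x ≠ 0 := by
      intro x hxpos hlt hFx
      set p : Fin (k+1) → ℝ := Fin.snoc (fun i : Fin k => a i.castSucc) x with hp
      have hppos : ∀ i, 0 < p i := by
        intro i
        refine Fin.lastCases ?_ ?_ i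
        · simpa [hp] using hxpos
        · intro i; simpa [hp] using ha_pos i.castSucc
      have hpmono : StrictMono p := by
        intro i j hij
        revert hij
        refine Fin.lastCases ?_ ?_ j
        · intro hij
          rcases Fin.exists_castSucc_eq.mpr (Fin.ne_last_of_lt hij) with ⟨i', rfl⟩
          simpa [hp] using hlt i'
        · intro j' hij
          rcases Fin.exists_castSucc_eq.mpr (Fin.ne_last_of_lt hij) with ⟨i', rfl⟩
          simp only [hp, Fin.snoc_castSucc]
          exact ha (by exact_mod_cast hij)
      have hroots : ∀ i, ∑ j, c j * p i ^ d j = 0 := by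
        intro i
        refine Fin.lastCases ?_ ?_ i
        · rw [hp, Fin.snoc_last, ← hFc]; exact hFx
        · intro i
          rw [hp, Fin.snoc_castSucc, ← hFc, hF]
          simp only
          apply Matrix.det_zero_of_row_eq (i := i.castSucc) (j := Fin.last k)
            (Fin.ne_last_of_lt (Fin.castSucc_lt_last i))
          ext j
          simp
      have := keyRoots (k+1) d hd c p hpmono hppos hroots (Fin.last k)
      exact absurd this (ne_of_gt hclast)
    -- the polynomial
    set P : Polynomial ℝ := ∑ j, Polynomial.monomial (d j) (c j) with hP
    have hevalP : ∀ x : ℝ, P.eval x = F x := by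
      intro x
      rw [hFc, hP, Polynomial.eval_finset_sum]
      simp [Polynomial.eval_monomial]
    have hcoeff : P.coeff (d (Fin.last k)) = c (Fin.last k) := by
      rw [hP, Polynomial.finset_sum_coeff]
      simp only [Polynomial.coeff_monomial]
      rw [Finset.sum_eq_single (Fin.last k)]
      · simp
      · intro j _ hj
        exact if_neg fun h => hj (hd.injective h)
      · intro h
        exact absurd (Finset.mem_univ _) h
    have hdlastpos : 0 < d (Fin.last k) := by
      have h0 : (0 : Fin (k+1)) < Fin.last k := by
        rw [Fin.lt_def]
        simpa using hk
      exact lt_of_le_of_lt (Nat.zero_le _) (hd h0)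
    have hdegle : P.degree ≤ (d (Fin.last k) : ℕ) := by
      refine le_trans (Polynomial.degree_sum_le _ _) ?_
      refine Finset.sup_le fun j _ => ?_
      refine le_trans (Polynomial.degree_monomial_le _ _) ?_
      exact_mod_cast hd.monotone (Fin.le_last j)
    have hdegeq : P.degree = (d (Fin.last k) : ℕ) :=
      le_antisymm hdegle (Polynomial.le_degree_of_ne_zero (by
        rw [hcoeff]; exact ne_of_gt hclast))
    have hnatdeg : P.natDegree = d (Fin.last k) :=
      Polynomial.natDegree_eq_of_degree_eq_some hdegeq
    have hlc : 0 < P.leadingCoeff := by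
      rw [Polynomial.leadingCoeff, hnatdeg, hcoeff]
      exact hclast
    have hdegpos : 0 < P.degree := by
      rw [hdegeq]
      exact_mod_cast hdlastpos
    have htop := Polynomial.tendsto_atTop_of_leadingCoeff_nonneg P hdegpos (le_of_lt hlc)
    obtain ⟨X, hX1, hX2⟩ :=
      ((Filter.eventually_gt_atTop (a (Fin.last k))).and (htop.eventually_ge_atTop 1)).exists
    have hFX : 0 < F X := by rw [← hevalP]; linarith
    have hcontF : Continuous F := by
      have : F = fun x => P.eval x := funext fun x => (hevalP x).symm
      rw [this]
      exact Polynomial.continuous P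
    have hlast0 : 0 < a (Fin.last k) := ha_pos _
    have hlastlt : ∀ i : Fin k, a i.castSucc < a (Fin.last k) :=
      fun i => ha (Fin.castSucc_lt_last i)
    have h1 : F (a (Fin.last k)) ≠ 0 := hFne _ hlast0 hlastlt
    have hFpos : 0 < F (a (Fin.last k)) := by
      rcases lt_or_gt_of_ne h1 with hneg | hpos
      · exfalso
        have h0mem : (0 : ℝ) ∈ Set.Icc (F (a (Fin.last k))) (F X) :=
          ⟨le_of_lt hneg, le_of_lt hFX⟩
        obtain ⟨y, hy, hy0⟩ :=
          intermediate_value_Icc (le_of_lt hX1) hcontF.continuousOn h0mem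
        refine hFne y (lt_of_lt_of_le hlast0 hy.1)
          (fun i => lt_of_lt_of_le (hlastlt i) hy.1) hy0
      · exact hpos
    have hsnoc : (Fin.snoc (fun i : Fin k => a i.castSucc) (a (Fin.last k)) :
        Fin (k+1) → ℝ) = a := Fin.snoc_init_self a
    have hFeq : F (a (Fin.last k)) = Matrix.det (Matrix.of fun i j => a i ^ d j) := by
      rw [hF]
      simp only [hsnoc]
    rwa [hFeq] at hFpos
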